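/- For every integer n ≥ 1 and every y ∈ ℤ^d with y_i = −1, one has P(τ = n and S_n = y) = (1/n) · P(S_n = y). -/

import Mathlib

open MeasureTheory ProbabilityTheory Filter
open scoped ENNReal NNReal
open Fin.NatCast

def pext (n : ℕ) [NeZero n] {α : Type*} (v : Fin n → α) : ℕ → α :=
  fun k => v ⟨k % n, Nat.mod_lt k (Nat.pos_of_ne_zero (NeZero.ne n))⟩

lemma pext_eq_of_lt {n : ℕ} [NeZero n] {α : Type*} (v : Fin n → α) {k : ℕ} (h : k < n) :
    pext n v k = v ⟨k, h⟩ := by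
  simp [pext, Nat.mod_eq_of_lt h]

lemma pext_fin {n : ℕ} [NeZero n] {α : Type*} (v : Fin n → α) (m : Fin n) :
    pext n v ↑m = v m := by
  rw [pext_eq_of_lt v m.isLt]

lemma pext_add {n : ℕ} [NeZero n] {α : Type*} (v : Fin n → α) (k : ℕ) :
    pext n v (k + n) = pext n v k := by
  simp [pext, Nat.add_mod_right]

lemma pext_mod_right {n : ℕ} [NeZero n] {α : Type*} (v : Fin n → α) (r k : ℕ) :
    pext n v (r + k % n) = pext n v (r + k) := by
  have h : (r + k % n) % n = (r + k) % n := by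
    conv_rhs => rw [Nat.add_mod]
    rw [Nat.add_mod r (k % n), Nat.mod_mod_of_dvd _ dvd_rfl]
  simp [pext, h]

lemma pext_addLeft {n : ℕ} [NeZero n] {α : Type*} (v : Fin n → α) (r : ℕ) (m : Fin n) :
    v ((r : Fin n) + m) = pext n v (r + ↑m) := by
  have h : ((r : Fin n) + m) = (⟨(r + ↑m) % n, Nat.mod_lt _ (Nat.pos_of_ne_zero (NeZero.ne n))⟩ : Fin n) := by
    apply Fin.ext
    rw [Fin.val_add, Fin.val_natCast, Nat.mod_add_mod]
  rw [h]; rfl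

lemma pext_sum {n : ℕ} [NeZero n] {α : Type*} [AddCommMonoid α] (v : Fin n → α) :
    ∑ k ∈ Finset.range n, pext n v k = ∑ m : Fin n, v m := by
  rw [← Fin.sum_univ_eq_sum_range (fun k => pext n v k) n]
  exact Fintype.sum_congr _ _ fun m => pext_fin v m

lemma cycle_exists_unique (n : ℕ) (hn : 1 ≤ n) (a : ℕ → ℤ)
    (ha : ∀ k, -1 ≤ a k) (hper : ∀ k, a (k + n) = a k)
    (hsum : ∑ k ∈ Finset.range n, a k = -1) :
    ∃! r, r < n ∧ ∀ m, 1 ≤ m → m < n → (∑ k ∈ Finset.range m, a (r + k)) ≠ -1 := by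
  set F : ℕ → ℤ := fun m => ∑ k ∈ Finset.range m, a k with hF
  have hFsucc : ∀ m, F (m + 1) = F m + a m := fun m => Finset.sum_range_succ a m
  have hdiff : ∀ r m, ∑ k ∈ Finset.range m, a (r + k) = F (r + m) - F r := by
    intro r m
    induction m with
    | zero => simp
    | succ m ih =>
      rw [Finset.sum_range_succ, ih, show r + (m + 1) = (r + m) + 1 by ring, hFsucc]
      ring
  have hshift : ∀ m, F (n + m) = F m - 1 := by
    intro m
    induction m with
    | zero => simpa [hF] using hsum
    | succ m ih =>
      rw [show n + (m + 1) = (n + m) + 1 by ring, hFsucc, ih, hFsucc,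
        show n + m = m + n by ring, hper]
      ring
  have key : ∀ r, (∀ m, 1 ≤ m → m < n → (∑ k ∈ Finset.range m, a (r + k)) ≠ -1) ↔
      (∀ m, m < n → F r ≤ F (r + m)) := by
    intro r
    constructor
    · intro h m
      induction m with
      | zero => simp
      | succ m ih =>
        intro hm
        have h1 : F r ≤ F (r + m) := ih (by omega)
        have h2 : F (r + (m + 1)) - F r ≠ -1 := by
          rw [← hdiff]; exact h (m + 1) (by omega) hm
        have h3 : F (r + (m + 1)) = F (r + m) + a (r + m) := by
          rw [show r + (m + 1) = (r + m) + 1 by ring, hFsucc]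
        have := ha (r + m)
        omega
    · intro h m hm1 hm2
      rw [hdiff]
      have := h m hm2
      omega
  have hex : ∃ r, r < n ∧ ∀ s, s < n → F r ≤ F s := by
    obtain ⟨x, hx, hx2⟩ := Finset.exists_min_image (Finset.range n) F ⟨0, Finset.mem_range.mpr (by omega)⟩
    exact ⟨x, Finset.mem_range.mp hx, fun s hs => hx2 s (Finset.mem_range.mpr hs)⟩
  set r0 := Nat.find hex with hr0def
  obtain ⟨hr0n, hr0min⟩ := Nat.find_spec hex
  have hlt : ∀ s, s < r0 → F r0 < F s := by
    intro s hs
    have hsn : s < n := lt_trans hs hr0n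
    have := Nat.find_min hex hs
    push_neg at this
    obtain ⟨t, htn, ht⟩ := this hsn
    exact lt_of_le_of_lt (hr0min t htn) ht
  have hgood : ∀ m, m < n → F r0 ≤ F (r0 + m) := by
    intro m hm
    rcases lt_or_ge (r0 + m) n with h | h
    · exact hr0min _ h
    · have hs : r0 + m = n + (r0 + m - n) := by omega
      have hlt' : r0 + m - n < r0 := by omega
      rw [hs, hshift]
      have := hlt _ hlt'
      omega
  have huniq : ∀ r1 r2, (r1 < n ∧ ∀ m, m < n → F r1 ≤ F (r1 + m)) →
      (r2 < n ∧ ∀ m, m < n → F r2 ≤ F (r2 + m)) → r1 = r2 := by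
    have main : ∀ r1 r2, r1 < r2 → (r1 < n ∧ ∀ m, m < n → F r1 ≤ F (r1 + m)) →
        (r2 < n ∧ ∀ m, m < n → F r2 ≤ F (r2 + m)) → False := by
      intro r1 r2 hlt12 h1' h2'
      obtain ⟨h1n, h1⟩ := h1'
      obtain ⟨h2n, h2⟩ := h2'
      have e1 : F r1 ≤ F r2 := by
        have := h1 (r2 - r1) (by omega)
        rwa [show r1 + (r2 - r1) = r2 by omega] at this
      have e2 : F r2 ≤ F r1 - 1 := by
        have := h2 (r1 + n - r2) (by omega)
        rw [show r2 + (r1 + n - r2) = n + r1 by omega, hshift] at this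
        omega
      omega
    intro r1 r2 h1 h2
    rcases Nat.lt_trichotomy r1 r2 with h | h | h
    · exact absurd (main r1 r2 h h1 h2) (by simp)
    · exact h
    · exact absurd (main r2 r1 h h2 h1) (by simp)
  refine ⟨r0, ⟨hr0n, (key r0).mpr hgood⟩, ?_⟩
  intro r hr
  exact huniq r r0 ⟨hr.1, (key r).mp hr.2⟩ ⟨hr0n, hgood⟩

lemma sInf_image_coe_eq_iff (A : Set ℕ) (n : ℕ) :
    sInf ((↑) '' A : Set ℕ∞) = (n : ℕ∞) ↔ n ∈ A ∧ ∀ m ∈ A, n ≤ m := by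
  have hinf : ∀ m0 : ℕ, m0 ∈ A → (∀ m ∈ A, m0 ≤ m) →
      sInf ((↑) '' A : Set ℕ∞) = (m0 : ℕ∞) := by
    intro m0 hm0 hlb
    refine le_antisymm (sInf_le ⟨m0, hm0, rfl⟩) (le_sInf ?_)
    rintro _ ⟨m, hm, rfl⟩
    exact_mod_cast hlb m hm
  constructor
  · intro h
    have hne : A.Nonempty := by
      by_contra hA
      rw [Set.not_nonempty_iff_eq_empty] at hA
      rw [hA] at h
      simp at h
    have h1 := hinf (sInf A) (Nat.sInf_mem hne) (fun m hm => Nat.sInf_le hm)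
    rw [h] at h1
    have : n = sInf A := by exact_mod_cast h1
    rw [this]
    exact ⟨Nat.sInf_mem hne, fun m hm => Nat.sInf_le hm⟩
  · rintro ⟨h1, h2⟩
    exact hinf n h1 h2

/-- The "good" set for rotation offset `r`. -/
def goodSet (n : ℕ) [NeZero n] {d : ℕ} (i : Fin d) (y : Fin d → ℤ) (r : ℕ) :
    Set (Fin n → Fin d → ℤ) :=
  {v | (∑ m, v m = y) ∧ ∀ m, 1 ≤ m → m < n →
    (∑ k ∈ Finset.range m, pext n v (r + k)) i ≠ -1}

def sumSet (n : ℕ) {d : ℕ} (y : Fin d → ℤ) : Set (Fin n → Fin d → ℤ) :=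
  {v | ∑ m, v m = y}

/-- (Ballot-type identity, Tak\'acs.) For the random walk `S` with i.i.d. steps
of law `ν̃ᵢ` (the shift by `-eᵢ` of a progeny law `νᵢ` on `ℤ₊^d`), letting
`τ = inf {n ≥ 1 : (Sₙ)ᵢ = -1}`, for every `n ≥ 1` and every `y` with `yᵢ = -1` one has
`P(τ = n, Sₙ = y) = (1/n) P(Sₙ = y)`. -/
theorem stmt0
    {d : ℕ} (hd : 1 ≤ d) (i : Fin d)
    {Ω : Type*} [MeasurableSpace Ω] (P : Measure Ω) [IsProbabilityMeasure P]
    (ν : Measure (Fin d → ℤ)) [IsProbabilityMeasure ν]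
    (hν : ν {k | ¬ ∀ j, 0 ≤ k j} = 0)
    (ξ : ℕ → Ω → (Fin d → ℤ))
    (hmeas : ∀ n, Measurable (ξ n))
    (hindep : iIndepFun ξ P)
    (hlaw : ∀ n, Measure.map (ξ n) P = Measure.map (fun k => k - Pi.single i 1) ν)
    (S : ℕ → Ω → (Fin d → ℤ))
    (hS : ∀ n ω, S n ω = ∑ m ∈ Finset.range n, ξ m ω)
    (τ : Ω → ℕ∞)
    (hτ : ∀ ω, τ ω = sInf ((↑) '' {m : ℕ | 1 ≤ m ∧ S m ω i = -1}))
    (n : ℕ) (hn : 1 ≤ n) (y : Fin d → ℤ) (hy : y i = -1) :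
    P {ω | τ ω = (n : ℕ∞) ∧ S n ω = y} = (n : ℝ≥0∞)⁻¹ * P {ω | S n ω = y} := by
  classical
  haveI : NeZero n := ⟨Nat.one_le_iff_ne_zero.mp hn⟩
  have hmeasE : ∀ B : Set (Fin d → ℤ), MeasurableSet B := fun B => B.to_countable.measurableSet
  have hmeasV : ∀ B : Set (Fin n → Fin d → ℤ), MeasurableSet B :=
    fun B => B.to_countable.measurableSet
  set μ : Measure (Fin d → ℤ) := Measure.map (fun k => k - Pi.single i 1) ν with hμdef
  have hsub : Measurable (fun k : Fin d → ℤ => k - Pi.single i 1) :=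
    measurable_pi_iff.mpr fun j => (measurable_pi_apply j).sub measurable_const
  have hμneg : ∀ w : Fin d → ℤ, w i < -1 → μ {w} = 0 := by
    intro w hw
    have h0 : μ {x | x i < -1} = 0 := by
      rw [hμdef, Measure.map_apply hsub (hmeasE _)]
      refine measure_mono_null ?_ hν
      intro k hk
      simp only [Set.mem_preimage, Set.mem_setOf_eq] at hk ⊢
      simp only [Pi.sub_apply, Pi.single_eq_same] at hk
      intro hall
      have h1 := hall i
      omega
    exact measure_mono_null (Set.singleton_subset_iff.mpr hw) h0
  set X : Ω → (Fin n → Fin d → ℤ) := fun ω m => ξ ↑m ω with hXdef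
  have hXmeas : Measurable X := measurable_pi_iff.mpr fun m => hmeas ↑m
  set q : (Fin n → Fin d → ℤ) → ℝ≥0∞ := fun v => ∏ m : Fin n, μ {v m} with hqdef
  have hstep : ∀ (m : ℕ) (w : Fin d → ℤ), P (ξ m ⁻¹' {w}) = μ {w} := by
    intro m w
    rw [← Measure.map_apply (hmeas m) (hmeasE _), hlaw m]
  -- joint pmf
  have hjoint : ∀ v, P (X ⁻¹' {v}) = q v := by
    intro v
    have hXv : X ⁻¹' {v} = ⋂ m ∈ Finset.range n, ξ m ⁻¹' {pext n v m} := by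
      ext ω
      simp only [Set.mem_preimage, Set.mem_singleton_iff, Set.mem_iInter, funext_iff,
        Finset.mem_range]
      constructor
      · intro h m hm
        rw [pext_eq_of_lt v hm]
        exact h ⟨m, hm⟩
      · intro h m
        have := h ↑m m.isLt
        rwa [pext_fin] at this
    have hind := (ProbabilityTheory.iIndepFun_iff_measure_inter_preimage_eq_mul.mp hindep)
      (Finset.range n) (sets := fun m => ({pext n v m} : Set (Fin d → ℤ)))
      (fun m _ => hmeasE _)
    rw [hXv, hind]
    rw [Finset.prod_congr rfl (fun m _ => hstep m (pext n v m))]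
    rw [← Fin.prod_univ_eq_prod_range (fun k => μ {pext n v k}) n]
    exact Fintype.prod_congr _ _ fun m => by rw [pext_fin]
  -- preimage measure as tsum
  have hpre : ∀ A : Set (Fin n → Fin d → ℤ),
      P (X ⁻¹' A) = ∑' v, Set.indicator A q v := by
    intro A
    have h1 : X ⁻¹' A = ⋃ v ∈ A, X ⁻¹' {v} := by
      ext ω; simp
    rw [h1, measure_biUnion A.to_countable ?_ (fun v _ => hXmeas (hmeasV _))]
    · rw [tsum_congr (fun v : A => hjoint ↑v), tsum_subtype A q]
    · intro v _ w _ hvw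
      refine Set.disjoint_left.mpr fun ω h1 h2 => ?_
      exact hvw (h1.symm.trans h2)
  -- event identifications
  have hSm : ∀ ω m, m ≤ n → S m ω = ∑ k ∈ Finset.range m, pext n (X ω) k := by
    intro ω m hm
    rw [hS]
    refine Finset.sum_congr rfl fun k hk => ?_
    rw [pext_eq_of_lt _ (lt_of_lt_of_le (Finset.mem_range.mp hk) hm)]
  have hBev : {ω | S n ω = y} = X ⁻¹' sumSet n y := by
    ext ω
    simp only [Set.mem_setOf_eq, Set.mem_preimage, sumSet]
    rw [hSm ω n le_rfl, pext_sum]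
  have hAev : {ω | τ ω = (n : ℕ∞) ∧ S n ω = y} = X ⁻¹' goodSet n i y 0 := by
    ext ω
    simp only [Set.mem_setOf_eq, Set.mem_preimage, goodSet, zero_add]
    rw [hτ ω, sInf_image_coe_eq_iff]
    have hSi : ∀ m, m ≤ n → S m ω i = (∑ k ∈ Finset.range m, pext n (X ω) k) i :=
      fun m hm => by rw [hSm ω m hm]
    have hsum_eq : (∑ m, X ω m = y) ↔ S n ω = y := by
      rw [hSm ω n le_rfl, pext_sum]
    constructor
    · rintro ⟨⟨⟨hn1, hSn⟩, hlb⟩, hSny⟩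
      refine ⟨hsum_eq.mpr hSny, fun m hm1 hm2 hbad => ?_⟩
      have hSmi : S m ω i = -1 := by rw [hSi m (le_of_lt hm2)]; exact hbad
      have := hlb m ⟨hm1, hSmi⟩
      omega
    · rintro ⟨hsum, hgood⟩
      have hSny : S n ω = y := hsum_eq.mp hsum
      refine ⟨⟨⟨hn, by rw [hSny, hy]⟩, fun m hm => ?_⟩, hSny⟩
      obtain ⟨hm1, hm2⟩ := hm
      by_contra hltn
      push_neg at hltn
      exact hgood m hm1 hltn (by rw [← hSi m (le_of_lt hltn)]; exact hm2)
  -- bridging sums applied at coordinate i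
  have hbridge : ∀ (v : Fin n → Fin d → ℤ) (r m : ℕ),
      (∑ k ∈ Finset.range m, pext n v (r + k)) i
        = ∑ k ∈ Finset.range m, pext n v (r + k) i := by
    intro v r m
    exact Finset.sum_apply i (Finset.range m) _
  -- the pointwise counting identity (cycle lemma)
  have hcount : ∀ v, Set.indicator (sumSet n y) q v
      = ∑ r ∈ Finset.range n, Set.indicator (goodSet n i y r) q v := by
    intro v
    by_cases hq0 : q v = 0
    · have h0 : ∀ B : Set (Fin n → Fin d → ℤ), Set.indicator B q v = 0 := by
        intro B; by_cases h : v ∈ B <;> simp [Set.indicator_apply, h, hq0]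
      rw [h0]
      exact (Finset.sum_eq_zero fun r _ => h0 _).symm
    · have hai : ∀ m : Fin n, -1 ≤ v m i := by
        intro m
        by_contra hmi
        push_neg at hmi
        exact hq0 (Finset.prod_eq_zero (Finset.mem_univ m) (hμneg (v m) hmi))
      by_cases hvS : v ∈ sumSet n y
      · have hsum_a : ∑ k ∈ Finset.range n, pext n v k i = -1 := by
          have h1 : (∑ k ∈ Finset.range n, pext n v k) = y := by
            rw [pext_sum]; exact hvS
          have h2 := congrFun h1 i
          rw [Finset.sum_apply] at h2
          rw [h2, hy]
        have hper_a : ∀ k, pext n v (k + n) i = pext n v k i := fun k => by rw [pext_add]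
        obtain ⟨r0, ⟨hr0n, hr0g⟩, hr0u⟩ := cycle_exists_unique n hn (fun k => pext n v k i)
          (fun k => hai ⟨k % n, Nat.mod_lt k (Nat.pos_of_ne_zero (NeZero.ne n))⟩)
          hper_a hsum_a
        have hmemiff : ∀ r, r < n → (v ∈ goodSet n i y r ↔ r = r0) := by
          intro r hrn
          constructor
          · intro hg
            refine hr0u r ⟨hrn, fun m h1 h2 => ?_⟩
            have h3 := hg.2 m h1 h2
            rwa [hbridge] at h3
          · rintro rfl
            exact ⟨hvS, fun m h1 h2 => by rw [hbridge]; exact hr0g m h1 h2⟩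
        rw [Set.indicator_of_mem hvS]
        have hterm : ∀ r ∈ Finset.range n,
            Set.indicator (goodSet n i y r) q v = if r = r0 then q v else 0 := by
          intro r hr
          by_cases h : r = r0
          · rw [if_pos h, Set.indicator_of_mem ((hmemiff r (Finset.mem_range.mp hr)).mpr h)]
          · rw [if_neg h,
              Set.indicator_of_notMem (fun hc => h ((hmemiff r (Finset.mem_range.mp hr)).mp hc))]
        rw [Finset.sum_congr rfl hterm, Finset.sum_ite_eq' (Finset.range n) r0 (fun _ => q v),
          if_pos (Finset.mem_range.mpr hr0n)]
      · rw [Set.indicator_of_notMem hvS]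
        exact (Finset.sum_eq_zero fun r _ =>
          Set.indicator_of_notMem (fun hg => hvS hg.1) q).symm
  -- rotation invariance of each term
  have hrot : ∀ r : ℕ, (∑' v, Set.indicator (goodSet n i y r) q v)
      = ∑' v, Set.indicator (goodSet n i y 0) q v := by
    intro r
    set e : Fin n ≃ Fin n := Equiv.addLeft (r : Fin n) with hedef
    set ψ : (Fin n → Fin d → ℤ) ≃ (Fin n → Fin d → ℤ) :=
      Equiv.arrowCongr e.symm (Equiv.refl _) with hψdef
    have hψ : ∀ (v : Fin n → Fin d → ℤ) m, ψ v m = v (e m) := by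
      intro v m
      simp [hψdef, Equiv.arrowCongr]
    have hqψ : ∀ v, q (ψ v) = q v := by
      intro v
      exact Fintype.prod_equiv e (fun m => μ {ψ v m}) (fun m => μ {v m})
        (fun m => by simp only [hψ])
    have hpe : ∀ (v : Fin n → Fin d → ℤ) (k : ℕ), pext n (ψ v) k = pext n v (r + k) := by
      intro v k
      set m0 : Fin n := ⟨k % n, Nat.mod_lt k (Nat.pos_of_ne_zero (NeZero.ne n))⟩ with hm0
      have h1 : pext n (ψ v) k = v ((r : Fin n) + m0) := hψ v m0
      have h2 : v ((r : Fin n) + m0) = pext n v (r + ↑m0) := pext_addLeft v r m0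
      have h3 : pext n v (r + ↑m0) = pext n v (r + k) := pext_mod_right v r k
      rw [h1, h2, h3]
    have hgg : ∀ v, ψ v ∈ goodSet n i y 0 ↔ v ∈ goodSet n i y r := by
      intro v
      have hsψ : ∑ m, ψ v m = ∑ m, v m :=
        Fintype.sum_equiv e (fun m => ψ v m) v (fun m => hψ v m)
      constructor
      · rintro ⟨h1, h2⟩
        refine ⟨by rw [← hsψ]; exact h1, fun m hm1 hm2 => ?_⟩
        have h3 := h2 m hm1 hm2
        simp only [zero_add] at h3
        have heq : (∑ k ∈ Finset.range m, pext n (ψ v) k)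
            = ∑ k ∈ Finset.range m, pext n v (r + k) :=
          Finset.sum_congr rfl fun k _ => hpe v k
        rwa [heq] at h3
      · rintro ⟨h1, h2⟩
        refine ⟨by rw [hsψ]; exact h1, fun m hm1 hm2 => ?_⟩
        simp only [zero_add]
        have heq : (∑ k ∈ Finset.range m, pext n (ψ v) k)
            = ∑ k ∈ Finset.range m, pext n v (r + k) :=
          Finset.sum_congr rfl fun k _ => hpe v k
        rw [heq]
        exact h2 m hm1 hm2
    calc (∑' v, Set.indicator (goodSet n i y r) q v)
        = ∑' v, Set.indicator (goodSet n i y 0) q (ψ v) := by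
          refine tsum_congr fun v => ?_
          by_cases h : v ∈ goodSet n i y r
          · rw [Set.indicator_of_mem h, Set.indicator_of_mem ((hgg v).mpr h), hqψ]
          · rw [Set.indicator_of_notMem h,
              Set.indicator_of_notMem (fun hc => h ((hgg v).mp hc))]
      _ = ∑' v, Set.indicator (goodSet n i y 0) q v := ψ.tsum_eq _
  -- assemble
  have hfinal : P (X ⁻¹' sumSet n y) = n * P (X ⁻¹' goodSet n i y 0) := by
    rw [hpre, hpre]
    calc (∑' v, Set.indicator (sumSet n y) q v)
        = ∑' v, ∑ r ∈ Finset.range n, Set.indicator (goodSet n i y r) q v := tsum_congr hcount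
      _ = ∑ r ∈ Finset.range n, ∑' v, Set.indicator (goodSet n i y r) q v :=
          Summable.tsum_finsetSum fun r _ => ENNReal.summable
      _ = ∑ r ∈ Finset.range n, ∑' v, Set.indicator (goodSet n i y 0) q v :=
          Finset.sum_congr rfl fun r _ => hrot r
      _ = n * ∑' v, Set.indicator (goodSet n i y 0) q v := by
          rw [Finset.sum_const, Finset.card_range, nsmul_eq_mul]
  rw [hAev, hBev, hfinal, ← mul_assoc, ENNReal.inv_mul_cancel, one_mul]
  · exact Nat.cast_ne_zero.mpr (by omega)
  · exact ENNReal.natCast_ne_top n
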